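/- Let n ≥ 1, 0 ≤ p ≤ q, and let R ∈ R_{p,q} be a symplectic homogeneous polynomial on ℂ^{2n} (so E†R = 0). Then for all a, b ∈ ℕ: (i) if a ≤ b ≤ q − p, then (E†)^a(E)^b R = (b!/(b−a)!)·((q−p−b+a)!/(q−p−b)!)·(E)^{b−a} R; (ii) if a > b, then (E†)^a(E)^b R = 0. -/

import Mathlib

open MvPolynomial

noncomputable section

/-- The inclusion `Fin n → Fin (2n)`, `j ↦ j`. -/
def il (n : ℕ) (j : Fin n) : Fin (2 * n) := ⟨j.1, by have := j.2; omega⟩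

/-- The inclusion `Fin n → Fin (2n)`, `j ↦ n + j`. -/
def ir (n : ℕ) (j : Fin n) : Fin (2 * n) := ⟨n + j.1, by have := j.2; omega⟩

/-- Bihomogeneous of bidegree `(p,q)` on `ℂ^{2n}`
(variables `Sum.inl j = z_j`, `Sum.inr j = z̄_j`, `j : Fin 2n`). -/
def BiHom (n : ℕ) (P : MvPolynomial (Fin (2 * n) ⊕ Fin (2 * n)) ℂ) (p q : ℕ) : Prop :=
  ∀ α ∈ P.support,
    (∑ j : Fin (2 * n), α (Sum.inl j)) = p ∧ (∑ j : Fin (2 * n), α (Sum.inr j)) = q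

/-- The twisted Euler operator `E = ∑_{j=1}^n (z_j ∂_{z̄_{n+j}} − z_{n+j} ∂_{z̄_j})`. -/
def Eop (n : ℕ) (P : MvPolynomial (Fin (2 * n) ⊕ Fin (2 * n)) ℂ) :
    MvPolynomial (Fin (2 * n) ⊕ Fin (2 * n)) ℂ :=
  ∑ j : Fin n,
    (X (Sum.inl (il n j)) * pderiv (Sum.inr (ir n j)) P
      - X (Sum.inl (ir n j)) * pderiv (Sum.inr (il n j)) P)

/-- The twisted Euler operator `E† = −∑_{j=1}^n (z̄_j ∂_{z_{n+j}} − z̄_{n+j} ∂_{z_j})`. -/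
def Edag (n : ℕ) (P : MvPolynomial (Fin (2 * n) ⊕ Fin (2 * n)) ℂ) :
    MvPolynomial (Fin (2 * n) ⊕ Fin (2 * n)) ℂ :=
  -∑ j : Fin n,
    (X (Sum.inr (il n j)) * pderiv (Sum.inl (ir n j)) P
      - X (Sum.inr (ir n j)) * pderiv (Sum.inl (il n j)) P)

variable {n : ℕ}
abbrev σs (n : ℕ) := (Fin (2 * n)) ⊕ (Fin (2 * n))
abbrev Pol (n : ℕ) := MvPolynomial (σs n) ℂ

lemma Eop_add (P Q : Pol n) : Eop n (P + Q) = Eop n P + Eop n Q := by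
  unfold Eop
  rw [← Finset.sum_add_distrib]
  refine Finset.sum_congr rfl fun j _ => ?_
  rw [map_add, map_add]; ring

lemma Eop_smul (c : ℂ) (P : Pol n) : Eop n (c • P) = c • Eop n P := by
  unfold Eop
  rw [Finset.smul_sum]
  refine Finset.sum_congr rfl fun j _ => ?_
  rw [Derivation.map_smul, Derivation.map_smul, smul_sub, mul_smul_comm, mul_smul_comm]

lemma Eop_zero : Eop n 0 = 0 := by
  simp [Eop]

lemma Edag_add (P Q : Pol n) : Edag n (P + Q) = Edag n P + Edag n Q := by
  unfold Edag
  rw [← neg_add, ← Finset.sum_add_distrib]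
  congr 1
  refine Finset.sum_congr rfl fun j _ => ?_
  rw [map_add, map_add]; ring

lemma Edag_smul (c : ℂ) (P : Pol n) : Edag n (c • P) = c • Edag n P := by
  unfold Edag
  rw [smul_neg, neg_inj, Finset.smul_sum]
  refine Finset.sum_congr rfl fun j _ => ?_
  rw [Derivation.map_smul, Derivation.map_smul, smul_sub, mul_smul_comm, mul_smul_comm]

lemma Edag_zero : Edag n 0 = 0 := by
  simp [Edag]

lemma Eop_sum {ι : Type*} (s : Finset ι) (f : ι → Pol n) :
    Eop n (∑ i ∈ s, f i) = ∑ i ∈ s, Eop n (f i) := by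
  classical
  induction s using Finset.induction with
  | empty => simp [Eop_zero]
  | insert _ _ h ih => simp [Finset.sum_insert h, Eop_add, ih]

lemma Edag_C_mul (c : ℂ) (P : Pol n) : Edag n (C c * P) = C c * Edag n P := by
  rw [← smul_eq_C_mul, ← smul_eq_C_mul, Edag_smul]

lemma Eop_iterate_zero (k : ℕ) : (Eop n)^[k] 0 = 0 :=
  Function.iterate_fixed Eop_zero k

lemma Edag_iterate_zero (k : ℕ) : (Edag n)^[k] 0 = 0 :=
  Function.iterate_fixed Edag_zero k

variable {n : ℕ}


lemma il_ne_ir (j k : Fin n) : il n j ≠ ir n k := by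
  intro h
  have := congrArg Fin.val h
  simp only [il, ir] at this
  omega

lemma il_eq_iff (j k : Fin n) : il n j = il n k ↔ j = k := by
  simp [il, Fin.ext_iff]

lemma ir_eq_iff (j k : Fin n) : ir n j = ir n k ↔ j = k := by
  simp [ir, Fin.ext_iff]

def esplit (n : ℕ) : Fin n ⊕ Fin n ≃ Fin (2 * n) :=
  finSumFinEquiv.trans (finCongr (by omega))

lemma esplit_inl (k : Fin n) : esplit n (Sum.inl k) = il n k := by
  simp [esplit, il, Fin.ext_iff]

lemma esplit_inr (k : Fin n) : esplit n (Sum.inr k) = ir n k := by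
  simp [esplit, ir, Fin.ext_iff]; omega

lemma sum_split {M : Type*} [AddCommMonoid M] (f : Fin (2 * n) → M) :
    ∑ i, f i = ∑ k : Fin n, (f (il n k) + f (ir n k)) := by
  rw [← Fintype.sum_equiv (esplit n) (fun x => f (esplit n x)) f (fun _ => rfl),
    Fintype.sum_sum_type, Finset.sum_add_distrib]
  simp [esplit_inl, esplit_inr]

lemma X_mul_monomial' (u : σs n) (t : (σs n) →₀ ℕ) (c : ℂ) :
    X u * monomial t c = monomial (t + Finsupp.single u 1) c := by
  rw [X, monomial_mul, one_mul, add_comm]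

lemma pderiv_comm (i j : σs n) (P : Pol n) :
    pderiv i (pderiv j P) = pderiv j (pderiv i P) := by
  induction P using MvPolynomial.induction_on' with
  | monomial s a =>
    classical
    simp only [pderiv_monomial]
    by_cases h : i = j
    · subst h; rfl
    · rw [tsub_right_comm]
      congr 1
      simp [Finsupp.tsub_apply, Finsupp.single_apply, h, Ne.symm h]
      ring
  | add p q hp hq => simp [map_add, hp, hq]


-- ============ Euler operator ============

lemma self_term_monomial (u : σs n) (α : (σs n) →₀ ℕ) (c : ℂ) :
    X u * pderiv u (monomial α c) = ((α u : ℂ)) • monomial α c := by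
  classical
  rw [pderiv_monomial, X_mul_monomial']
  by_cases h : α u = 0
  · simp [h]
  · have hexp : α - Finsupp.single u 1 + Finsupp.single u 1 = α := by
      ext i
      simp only [Finsupp.coe_add, Finsupp.coe_tsub, Pi.add_apply, Pi.sub_apply,
        Finsupp.single_apply]
      by_cases hi : u = i
      · subst hi; rw [if_pos rfl]; omega
      · simp [hi]
    rw [hexp, smul_monomial, smul_eq_mul, mul_comm]

def DL (n : ℕ) (P : Pol n) : Pol n :=
  ∑ k : Fin n, (X (Sum.inl (il n k)) * pderiv (Sum.inl (il n k)) P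
    + X (Sum.inl (ir n k)) * pderiv (Sum.inl (ir n k)) P)

def DR (n : ℕ) (P : Pol n) : Pol n :=
  ∑ k : Fin n, (X (Sum.inr (il n k)) * pderiv (Sum.inr (il n k)) P
    + X (Sum.inr (ir n k)) * pderiv (Sum.inr (ir n k)) P)

lemma DL_monomial (α : (σs n) →₀ ℕ) (c : ℂ) :
    DL n (monomial α c) = (((∑ i : Fin (2 * n), α (Sum.inl i) : ℕ) : ℂ)) • monomial α c := by
  unfold DL
  simp only [self_term_monomial]
  rw [sum_split (fun i => α (Sum.inl i)), Nat.cast_sum, Finset.sum_smul]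
  refine Finset.sum_congr rfl fun k _ => ?_
  push_cast
  rw [add_smul]

lemma DR_monomial (α : (σs n) →₀ ℕ) (c : ℂ) :
    DR n (monomial α c) = (((∑ i : Fin (2 * n), α (Sum.inr i) : ℕ) : ℂ)) • monomial α c := by
  unfold DR
  simp only [self_term_monomial]
  rw [sum_split (fun i => α (Sum.inr i)), Nat.cast_sum, Finset.sum_smul]
  refine Finset.sum_congr rfl fun k _ => ?_
  push_cast
  rw [add_smul]

lemma DL_sum {ι : Type*} (s : Finset ι) (f : ι → Pol n) :
    DL n (∑ i ∈ s, f i) = ∑ i ∈ s, DL n (f i) := by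
  unfold DL
  rw [Finset.sum_comm]
  refine Finset.sum_congr rfl fun k _ => ?_
  rw [map_sum, map_sum, Finset.mul_sum, Finset.mul_sum, ← Finset.sum_add_distrib]

lemma DR_sum {ι : Type*} (s : Finset ι) (f : ι → Pol n) :
    DR n (∑ i ∈ s, f i) = ∑ i ∈ s, DR n (f i) := by
  unfold DR
  rw [Finset.sum_comm]
  refine Finset.sum_congr rfl fun k _ => ?_
  rw [map_sum, map_sum, Finset.mul_sum, Finset.mul_sum, ← Finset.sum_add_distrib]

lemma DL_eq {P : Pol n} {p q : ℕ} (hP : BiHom n P p q) : DL n P = (p : ℂ) • P := by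
  conv_lhs => rw [← support_sum_monomial_coeff P]
  conv_rhs => rw [← support_sum_monomial_coeff P]
  rw [DL_sum, Finset.smul_sum]
  refine Finset.sum_congr rfl fun α hα => ?_
  rw [DL_monomial, (hP α hα).1]

lemma DR_eq {P : Pol n} {p q : ℕ} (hP : BiHom n P p q) : DR n P = (q : ℂ) • P := by
  conv_lhs => rw [← support_sum_monomial_coeff P]
  conv_rhs => rw [← support_sum_monomial_coeff P]
  rw [DR_sum, Finset.smul_sum]
  refine Finset.sum_congr rfl fun α hα => ?_
  rw [DR_monomial, (hP α hα).2]

-- ============ vanishing when no z̄ left ============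

lemma pderiv_inr_eq_zero {P : Pol n} {p : ℕ} (hP : BiHom n P p 0) (v : Fin (2 * n)) :
    pderiv (Sum.inr v) P = 0 := by
  conv_lhs => rw [← support_sum_monomial_coeff P]
  rw [map_sum]
  refine Finset.sum_eq_zero fun α hα => ?_
  rw [pderiv_monomial]
  have h0 : α (Sum.inr v) = 0 := by
    have := (hP α hα).2
    by_contra hne
    have : 0 < ∑ j : Fin (2 * n), α (Sum.inr j) :=
      Finset.sum_pos' (fun _ _ => Nat.zero_le _) ⟨v, Finset.mem_univ v, Nat.pos_of_ne_zero hne⟩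
    omega
  simp [h0]

lemma Eop_eq_zero_of {P : Pol n} {p : ℕ} (hP : BiHom n P p 0) : Eop n P = 0 := by
  unfold Eop
  refine Finset.sum_eq_zero fun j _ => ?_
  rw [pderiv_inr_eq_zero hP, pderiv_inr_eq_zero hP]
  ring

-- ============ BiHom preservation ============

lemma T_sum_form (u v : σs n) (P : Pol n) :
    X u * pderiv v P
      = ∑ α ∈ P.support,
          monomial (α - Finsupp.single v 1 + Finsupp.single u 1) (coeff α P * α v) := by
  conv_lhs => rw [← support_sum_monomial_coeff P]
  rw [map_sum, Finset.mul_sum]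
  refine Finset.sum_congr rfl fun α _ => ?_
  rw [pderiv_monomial, X_mul_monomial']

lemma coeff_T_ne_zero {u v : σs n} {P : Pol n} {β : (σs n) →₀ ℕ}
    (h : coeff β (X u * pderiv v P) ≠ 0) :
    ∃ α ∈ P.support, α v ≠ 0 ∧ β = α - Finsupp.single v 1 + Finsupp.single u 1 := by
  classical
  rw [T_sum_form, coeff_sum] at h
  obtain ⟨α, hα, hne⟩ := Finset.exists_ne_zero_of_sum_ne_zero h
  rw [coeff_monomial] at hne
  refine ⟨α, hα, ?_, ?_⟩
  · intro h0
    rw [h0] at hne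
    simp at hne
  · by_contra hne2
    rw [if_neg (fun hh => hne2 hh.symm)] at hne
    exact hne rfl

lemma biHom_zero (p q : ℕ) : BiHom n (0 : Pol n) p q := by
  intro α hα
  simp at hα

lemma shift_sum_inl (α : (σs n) →₀ ℕ) (u v : Fin (2 * n)) :
    (∑ i : Fin (2 * n), ((α - Finsupp.single (Sum.inr v : σs n) 1 + Finsupp.single (Sum.inl u : σs n) 1 : (σs n) →₀ ℕ)) (Sum.inl i))
      = (∑ i : Fin (2 * n), α (Sum.inl i)) + 1 := by
  classical
  have key : ∀ i : Fin (2 * n),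
      ((α - Finsupp.single (Sum.inr v : σs n) 1 + Finsupp.single (Sum.inl u : σs n) 1 : (σs n) →₀ ℕ)) (Sum.inl i)
        = α (Sum.inl i) + (if u = i then 1 else 0) := by
    intro i
    simp only [Finsupp.coe_add, Finsupp.coe_tsub, Pi.add_apply, Pi.sub_apply,
      Finsupp.single_apply]
    have h1 : (if (Sum.inr v : σs n) = Sum.inl i then (1:ℕ) else 0) = 0 := by simp
    have h2 : (if (Sum.inl u : σs n) = Sum.inl i then (1:ℕ) else 0) = if u = i then 1 else 0 := by
      by_cases h : u = i <;> simp [h]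
    rw [h1, h2]
    omega
  rw [Finset.sum_congr rfl (fun i _ => key i), Finset.sum_add_distrib,
    Finset.sum_ite_eq (Finset.univ : Finset (Fin (2*n))) u (fun _ => (1:ℕ))]
  simp

lemma shift_sum_inr (α : (σs n) →₀ ℕ) (u v : Fin (2 * n)) (hv : α (Sum.inr v) ≠ 0) :
    (∑ i : Fin (2 * n), ((α - Finsupp.single (Sum.inr v : σs n) 1 + Finsupp.single (Sum.inl u : σs n) 1 : (σs n) →₀ ℕ)) (Sum.inr i)) + 1
      = ∑ i : Fin (2 * n), α (Sum.inr i) := by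
  classical
  have key : ∀ i : Fin (2 * n),
      ((α - Finsupp.single (Sum.inr v : σs n) 1 + Finsupp.single (Sum.inl u : σs n) 1 : (σs n) →₀ ℕ)) (Sum.inr i)
        = α (Sum.inr i) - (if v = i then 1 else 0) := by
    intro i
    simp only [Finsupp.coe_add, Finsupp.coe_tsub, Pi.add_apply, Pi.sub_apply,
      Finsupp.single_apply]
    have h1 : (if (Sum.inr v : σs n) = Sum.inr i then (1:ℕ) else 0) = if v = i then 1 else 0 := by
      by_cases h : v = i <;> simp [h]
    have h2 : (if (Sum.inl u : σs n) = Sum.inr i then (1:ℕ) else 0) = 0 := by simp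
    rw [h1, h2, add_zero]
  rw [Finset.sum_congr rfl (fun i _ => key i),
    ← Finset.add_sum_erase _ _ (Finset.mem_univ v), if_pos rfl,
    ← Finset.add_sum_erase _ (fun i => α (Sum.inr i)) (Finset.mem_univ v)]
  have he : ∀ i ∈ Finset.univ.erase v,
      α (Sum.inr i) - (if v = i then 1 else 0) = α (Sum.inr i) := by
    intro i hi
    rw [if_neg (Finset.ne_of_mem_erase hi).symm, Nat.sub_zero]
  rw [Finset.sum_congr rfl he]
  omega

lemma biHom_T {P : Pol n} {p q : ℕ} (hP : BiHom n P p (q + 1)) (u v : Fin (2 * n))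
    {β : (σs n) →₀ ℕ} (h : coeff β (X (Sum.inl u) * pderiv (Sum.inr v) P) ≠ 0) :
    (∑ i : Fin (2 * n), β (Sum.inl i)) = p + 1 ∧ (∑ i : Fin (2 * n), β (Sum.inr i)) = q := by
  obtain ⟨α, hα, hv, hβ⟩ := coeff_T_ne_zero h
  obtain ⟨h1, h2⟩ := hP α hα
  subst hβ
  constructor
  · rw [shift_sum_inl, h1]
  · have := shift_sum_inr α u v hv
    omega

lemma biHom_Eop {P : Pol n} {p q : ℕ} (hP : BiHom n P p (q + 1)) :
    BiHom n (Eop n P) (p + 1) q := by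
  intro β hβ
  rw [mem_support_iff] at hβ
  unfold Eop at hβ
  rw [coeff_sum] at hβ
  obtain ⟨j, _, hne⟩ := Finset.exists_ne_zero_of_sum_ne_zero hβ
  rw [coeff_sub] at hne
  have hor : coeff β (X (Sum.inl (il n j)) * pderiv (Sum.inr (ir n j)) P) ≠ 0 ∨
      coeff β (X (Sum.inl (ir n j)) * pderiv (Sum.inr (il n j)) P) ≠ 0 := by
    by_contra hc
    push_neg at hc
    rw [hc.1, hc.2, sub_self] at hne
    exact hne rfl
  rcases hor with h | h
  · exact biHom_T hP _ _ h
  · exact biHom_T hP _ _ h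

-- ============ commutator ============

def Fterm (n : ℕ) (j : Fin n) (P : Pol n) : Pol n :=
  X (Sum.inl (il n j)) * pderiv (Sum.inr (ir n j)) P
    - X (Sum.inl (ir n j)) * pderiv (Sum.inr (il n j)) P

def Gterm (n : ℕ) (k : Fin n) (P : Pol n) : Pol n :=
  X (Sum.inr (ir n k)) * pderiv (Sum.inl (il n k)) P
    - X (Sum.inr (il n k)) * pderiv (Sum.inl (ir n k)) P

lemma Eop_eq (P : Pol n) : Eop n P = ∑ j, Fterm n j P := rfl

lemma Edag_eq (P : Pol n) : Edag n P = ∑ k, Gterm n k P := by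
  unfold Edag Gterm
  rw [← Finset.sum_neg_distrib]
  refine Finset.sum_congr rfl fun k _ => ?_
  ring

lemma Fterm_sum {ι : Type*} (j : Fin n) (s : Finset ι) (f : ι → Pol n) :
    Fterm n j (∑ i ∈ s, f i) = ∑ i ∈ s, Fterm n j (f i) := by
  unfold Fterm
  rw [map_sum, map_sum, Finset.mul_sum, Finset.mul_sum, ← Finset.sum_sub_distrib]

lemma Gterm_sum {ι : Type*} (k : Fin n) (s : Finset ι) (f : ι → Pol n) :
    Gterm n k (∑ i ∈ s, f i) = ∑ i ∈ s, Gterm n k (f i) := by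
  unfold Gterm
  rw [map_sum, map_sum, Finset.mul_sum, Finset.mul_sum, ← Finset.sum_sub_distrib]

def Ek (n : ℕ) (k : Fin n) (P : Pol n) : Pol n :=
  (X (Sum.inr (il n k)) * pderiv (Sum.inr (il n k)) P
    + X (Sum.inr (ir n k)) * pderiv (Sum.inr (ir n k)) P)
  - (X (Sum.inl (il n k)) * pderiv (Sum.inl (il n k)) P
    + X (Sum.inl (ir n k)) * pderiv (Sum.inl (ir n k)) P)

lemma key_pair (k j : Fin n) (P : Pol n) :
    Gterm n k (Fterm n j P) - Fterm n j (Gterm n k P) = if j = k then Ek n k P else 0 := by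
  classical
  have hc : ∀ (a b : Fin (2 * n)) (Q : Pol n),
      pderiv (Sum.inr a : σs n) (pderiv (Sum.inl b : σs n) Q)
        = pderiv (Sum.inl b : σs n) (pderiv (Sum.inr a : σs n) Q) :=
    fun a b Q => pderiv_comm _ _ Q
  unfold Gterm Fterm Ek
  by_cases hjk : j = k
  · subst hjk
    rw [if_pos rfl]
    simp only [map_sub, pderiv_mul, pderiv_X_self,
      pderiv_X_of_ne (fun h => il_ne_ir j j (Sum.inl.inj h).symm),
      pderiv_X_of_ne (fun h => il_ne_ir j j (Sum.inl.inj h)),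
      pderiv_X_of_ne (fun h => il_ne_ir j j (Sum.inr.inj h).symm),
      pderiv_X_of_ne (fun h => il_ne_ir j j (Sum.inr.inj h)),
      pderiv_X_of_ne (fun h : (Sum.inl _ : σs n) = Sum.inr _ => Sum.inl_ne_inr h),
      pderiv_X_of_ne (fun h : (Sum.inr _ : σs n) = Sum.inl _ => Sum.inr_ne_inl h),
      hc]
    ring
  · rw [if_neg hjk]
    have h1 : il n j ≠ il n k := fun h => hjk ((il_eq_iff j k).mp h)
    have h2 : ir n j ≠ ir n k := fun h => hjk ((ir_eq_iff j k).mp h)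
    simp only [map_sub, pderiv_mul,
      pderiv_X_of_ne (fun h : (Sum.inl (il n j) : σs n) = Sum.inl (il n k) => h1 (Sum.inl.inj h)),
      pderiv_X_of_ne (fun h : (Sum.inl (ir n j) : σs n) = Sum.inl (ir n k) => h2 (Sum.inl.inj h)),
      pderiv_X_of_ne (fun h : (Sum.inl (il n j) : σs n) = Sum.inl (ir n k) => il_ne_ir j k (Sum.inl.inj h)),
      pderiv_X_of_ne (fun h : (Sum.inl (ir n j) : σs n) = Sum.inl (il n k) => il_ne_ir k j (Sum.inl.inj h).symm),
      pderiv_X_of_ne (fun h : (Sum.inr (il n k) : σs n) = Sum.inr (il n j) => h1 (Sum.inr.inj h).symm),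
      pderiv_X_of_ne (fun h : (Sum.inr (ir n k) : σs n) = Sum.inr (ir n j) => h2 (Sum.inr.inj h).symm),
      pderiv_X_of_ne (fun h : (Sum.inr (il n k) : σs n) = Sum.inr (ir n j) => il_ne_ir k j (Sum.inr.inj h)),
      pderiv_X_of_ne (fun h : (Sum.inr (ir n k) : σs n) = Sum.inr (il n j) => il_ne_ir j k (Sum.inr.inj h).symm),
      pderiv_X_of_ne (fun h : (Sum.inl _ : σs n) = Sum.inr _ => Sum.inl_ne_inr h),
      pderiv_X_of_ne (fun h : (Sum.inr _ : σs n) = Sum.inl _ => Sum.inr_ne_inl h),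
      hc]
    ring

lemma comm_lemma (P : Pol n) :
    Edag n (Eop n P) = Eop n (Edag n P) + DR n P - DL n P := by
  have hE : Edag n (Eop n P) - Eop n (Edag n P) = DR n P - DL n P := by
    rw [Eop_eq P, Edag_eq P, Edag_eq (∑ j, Fterm n j P), Eop_eq (∑ k, Gterm n k P)]
    calc (∑ k, Gterm n k (∑ j, Fterm n j P)) - ∑ j, Fterm n j (∑ k, Gterm n k P)
        = (∑ k, ∑ j, Gterm n k (Fterm n j P)) - ∑ j, ∑ k, Fterm n j (Gterm n k P) := by
          rw [Finset.sum_congr rfl fun k _ => Gterm_sum k Finset.univ (fun j => Fterm n j P),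
            Finset.sum_congr rfl fun j _ => Fterm_sum j Finset.univ (fun k => Gterm n k P)]
      _ = ∑ k, ∑ j, (Gterm n k (Fterm n j P) - Fterm n j (Gterm n k P)) := by
          rw [Finset.sum_comm (s := Finset.univ) (t := Finset.univ)
            (f := fun j k => Fterm n j (Gterm n k P))]
          rw [← Finset.sum_sub_distrib]
          refine Finset.sum_congr rfl fun k _ => ?_
          rw [← Finset.sum_sub_distrib]
      _ = ∑ k, Ek n k P := by
          refine Finset.sum_congr rfl fun k _ => ?_
          rw [Finset.sum_congr rfl fun j _ => key_pair k j P]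
          simp
      _ = DR n P - DL n P := by
          unfold Ek DR DL
          rw [← Finset.sum_sub_distrib]
  linear_combination hE

-- ============ iterates ============

lemma biHom_iter {R : Pol n} {p q : ℕ} (hR : BiHom n R p q) :
    ∀ k, BiHom n ((Eop n)^[k] R) (p + k) (q - k) := by
  intro k
  induction k with
  | zero => simpa using hR
  | succ k ih =>
    rw [Function.iterate_succ_apply']
    rcases Nat.eq_zero_or_pos (q - k) with h0 | hpos
    · rw [h0] at ih
      rw [Eop_eq_zero_of ih]
      exact biHom_zero _ _
    · obtain ⟨m, hm⟩ : ∃ m, q - k = m + 1 := ⟨q - k - 1, by omega⟩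
      rw [hm] at ih
      have := biHom_Eop ih
      have hmm : m = q - (k + 1) := by omega
      rw [hmm] at this
      rwa [← Nat.add_assoc] 

lemma OSL {R : Pol n} {p q : ℕ} (hR : BiHom n R p q) (h0 : Edag n R = 0) :
    ∀ k, k ≤ q →
      Edag n ((Eop n)^[k + 1] R)
        = (((k : ℂ) + 1) * ((q : ℂ) - (p : ℂ) - (k : ℂ))) • (Eop n)^[k] R := by
  intro k
  induction k with
  | zero =>
    intro _
    rw [Function.iterate_succ_apply', Function.iterate_zero_apply, comm_lemma,
      h0, Eop_zero, DR_eq hR, DL_eq hR]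
    rw [zero_add, ← sub_smul]
    ring_nf
  | succ k ih =>
    intro hk
    have hk' : k ≤ q := by omega
    rw [Function.iterate_succ_apply' (Eop n) (k+1), comm_lemma, ih hk', Eop_smul,
      ← Function.iterate_succ_apply' (Eop n) k,
      DR_eq (biHom_iter hR (k+1)), DL_eq (biHom_iter hR (k+1))]
    have c1 : ((q - (k+1) : ℕ) : ℂ) = (q : ℂ) - (k : ℂ) - 1 := by
      push_cast [Nat.cast_sub hk]
      ring
    have c2 : ((p + (k+1) : ℕ) : ℂ) = (p : ℂ) + (k : ℂ) + 1 := by push_cast; ring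
    rw [c1, c2, ← add_smul, ← sub_smul]
    congr 1
    push_cast
    ring

lemma L1 {v : Pol n} {p' q' : ℕ} (hv : BiHom n v p' q') (h0 : Edag n v = 0)
    (hlt : q' < p') : v = 0 := by
  have key : ∀ j, j ≤ q' + 1 → (Eop n)^[q' + 1 - j] v = 0 := by
    intro j
    induction j with
    | zero =>
      intro _
      rw [Nat.sub_zero, Function.iterate_succ_apply']
      exact Eop_eq_zero_of (by simpa using biHom_iter hv q')
    | succ j ih =>
      intro hj
      have hj' : j ≤ q' + 1 := by omega
      set k := q' + 1 - (j + 1) with hkdef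
      have hk : k ≤ q' := by omega
      have hkk : q' + 1 - j = k + 1 := by omega
      have hprev := ih hj'
      rw [hkk] at hprev
      have := OSL hv h0 k hk
      rw [hprev, Edag_zero] at this
      have hcoeff : (((k : ℂ) + 1) * ((q' : ℂ) - (p' : ℂ) - (k : ℂ))) ≠ 0 := by
        apply mul_ne_zero
        · intro h
          have : ((k : ℂ) + 1) = ((k + 1 : ℕ) : ℂ) := by push_cast; ring
          rw [this] at h
          exact (Nat.cast_ne_zero (R := ℂ)).mpr (Nat.succ_ne_zero k) h
        · intro h
          have : ((q' : ℕ) : ℂ) = (((p' + k) : ℕ) : ℂ) := by push_cast; linear_combination h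
          have := Nat.cast_injective (R := ℂ) this
          omega
      have := (smul_eq_zero.mp this.symm).resolve_left hcoeff
      exact this
  have := key (q' + 1) le_rfl
  simpa using this

lemma Etop {R : Pol n} {p q : ℕ} (hR : BiHom n R p q) (h0 : Edag n R = 0) (hpq : p ≤ q) :
    (Eop n)^[q - p + 1] R = 0 := by
  rcases Nat.eq_zero_or_pos p with hp | hp
  · subst hp
    rw [Nat.sub_zero, Function.iterate_succ_apply']
    exact Eop_eq_zero_of (by simpa using biHom_iter hR q)
  · set m := q - p with hm
    have hmq : m ≤ q := by omega
    have hosl := OSL hR h0 m hmq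
    have hzero : ((m : ℂ) + 1) * ((q : ℂ) - (p : ℂ) - (m : ℂ)) = 0 := by
      have : ((m : ℕ) : ℂ) = (q : ℂ) - (p : ℂ) := by
        rw [hm]
        push_cast [Nat.cast_sub hpq]
        ring
      rw [this]
      ring
    rw [hzero, zero_smul] at hosl
    have hbh : BiHom n ((Eop n)^[m + 1] R) (p + (m + 1)) (q - (m + 1)) := biHom_iter hR (m + 1)
    refine L1 hbh hosl ?_
    omega

-- ============ main ============

lemma factorial_cast_ne (m : ℕ) : ((m.factorial : ℂ)) ≠ 0 :=
  Nat.cast_ne_zero.mpr (Nat.factorial_ne_zero m)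

lemma aux_main {R : Pol n} {p q : ℕ} (hpq : p ≤ q) (hR : BiHom n R p q)
    (h0 : Edag n R = 0) (b : ℕ) (hb : b ≤ q - p) :
    ∀ a, a ≤ b →
      (Edag n)^[a] ((Eop n)^[b] R)
        = C (((b.factorial : ℂ) / ((b - a).factorial : ℂ)) *
            (((q - p - b + a).factorial : ℂ) / ((q - p - b).factorial : ℂ))) *
          (Eop n)^[b - a] R := by
  intro a
  induction a with
  | zero =>
    intro _
    rw [Nat.sub_zero, Nat.add_zero, div_self (factorial_cast_ne b),
      div_self (factorial_cast_ne (q - p - b)), one_mul, map_one, one_mul,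
      Function.iterate_zero_apply]
  | succ a ih =>
    intro ha
    have ha' : a ≤ b := by omega
    set k := b - a - 1 with hkdef
    have hba : b - a = k + 1 := by omega
    have hkq : k ≤ q := by omega
    rw [Function.iterate_succ_apply', ih ha', Edag_C_mul, hba, OSL hR h0 k hkq,
      smul_eq_C_mul, ← mul_assoc, ← C_mul]
    have e1 : b - (a + 1) = k := by omega
    have e2 : q - p - b + (a + 1) = (q - p - b + a) + 1 := by omega
    rw [e1, e2]
    congr 1
    rw [Nat.factorial_succ (q - p - b + a), Nat.factorial_succ k]
    have e4 : ((k : ℂ)) + a + 1 = b := by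
      have : (k + a + 1 : ℕ) = b := by omega
      exact_mod_cast congrArg (Nat.cast : ℕ → ℂ) this
    have c2 : ((q : ℂ) - (p : ℂ) - (k : ℂ)) = ((q - p - b + a : ℕ) : ℂ) + 1 := by
      have e3 : q - p - b + a + b + p = q + a := by omega
      have e3' : ((q - p - b + a : ℕ) : ℂ) + b + p = q + a := by
        exact_mod_cast congrArg (Nat.cast : ℕ → ℂ) e3
      linear_combination -e3' - e4
    rw [c2]
    have hk0 : ((k.factorial : ℂ)) ≠ 0 := factorial_cast_ne k
    have hM0 : (((q - p - b).factorial : ℂ)) ≠ 0 := factorial_cast_ne (q - p - b)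
    have hMa0 : (((q - p - b + a).factorial : ℂ)) ≠ 0 := factorial_cast_ne (q - p - b + a)
    have hk1 : ((k : ℂ) + 1) ≠ 0 := by
      intro h
      have : ((k + 1 : ℕ) : ℂ) = 0 := by push_cast; linear_combination h
      exact Nat.succ_ne_zero k (Nat.cast_injective (R := ℂ) (by simpa using this))
    push_cast
    field_simp

theorem statement6 (n p q : ℕ) (hn : 1 ≤ n) (hpq : p ≤ q)
    (R : MvPolynomial (Fin (2 * n) ⊕ Fin (2 * n)) ℂ)
    (hR : BiHom n R p q) (hRsymp : Edag n R = 0) (a b : ℕ) :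
    (a ≤ b → b ≤ q - p →
      (Edag n)^[a] ((Eop n)^[b] R)
        = C (((b.factorial : ℂ) / ((b - a).factorial : ℂ)) *
            (((q - p - b + a).factorial : ℂ) / ((q - p - b).factorial : ℂ))) *
          (Eop n)^[b - a] R) ∧
    (b < a → (Edag n)^[a] ((Eop n)^[b] R) = 0) := by
  constructor
  · intro ha hb
    exact aux_main hpq hR hRsymp b hb a ha
  · intro hba
    by_cases hb : b ≤ q - p
    · have h1 := aux_main hpq hR hRsymp b hb b le_rfl
      rw [Nat.sub_self, Function.iterate_zero_apply] at h1
      have hsplit : a = (a - b) + b := by omega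
      rw [hsplit, Function.iterate_add_apply, h1]
      have hsplit2 : a - b = (a - b - 1) + 1 := by omega
      rw [hsplit2, Function.iterate_succ_apply, Edag_C_mul, hRsymp, mul_zero,
        Edag_iterate_zero]
    · have hE0 : (Eop n)^[b] R = 0 := by
        have hsplit : b = (b - (q - p + 1)) + (q - p + 1) := by omega
        rw [hsplit, Function.iterate_add_apply, Etop hR hRsymp hpq, Eop_iterate_zero]
      rw [hE0, Edag_iterate_zero]

end
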